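/- For real polynomials F, G of degree at most 4, let ⟨F,G⟩₄ denote the (constant) polynomial F''''G − F'''G' + F''G'' − F'G''' + FG''''; and for a real quadratic a and a polynomial R of degree at most 4, let τ(a,R) = 6a''R − 3a'R' + aR'' (a polynomial of degree at most 2). Then for all real quadratics p, q and every real polynomial R of degree at most 4, the following three conditions are equivalent: (i) ⟨pq, R⟩₄ = 0, where pq is the degree ≤ 4 product polynomial; (ii) ⟨τ(q,R), p⟩ = 0; (iii) ⟨τ(p,R), q⟩ = 0. Here for quadratics a, b, ⟨a,b⟩ = 2a₁b₁ − (a₂b₀ + a₀b₂). -/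
import Mathlib


/-- A quartic `a₀z⁴ + a₁z³ + a₂z² + a₃z + a₄` and its derivatives. -/
def quartic (a0 a1 a2 a3 a4 z : ℝ) : ℝ := a0 * z ^ 4 + a1 * z ^ 3 + a2 * z ^ 2 + a3 * z + a4
def quarticD1 (a0 a1 a2 a3 a4 z : ℝ) : ℝ := 4 * a0 * z ^ 3 + 3 * a1 * z ^ 2 + 2 * a2 * z + a3
def quarticD2 (a0 a1 a2 a3 a4 z : ℝ) : ℝ := 12 * a0 * z ^ 2 + 6 * a1 * z + 2 * a2
def quarticD3 (a0 a1 a2 a3 a4 z : ℝ) : ℝ := 24 * a0 * z + 6 * a1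

/-- The apolarity pairing `⟨F,G⟩₄ = F''''G − F'''G' + F''G'' − F'G''' + FG''''`
of two quartics, evaluated at `z` (it is constant in `z`). -/
def apolarity4 (f0 f1 f2 f3 f4 g0 g1 g2 g3 g4 z : ℝ) : ℝ :=
  24 * f0 * quartic g0 g1 g2 g3 g4 z
    - quarticD3 f0 f1 f2 f3 f4 z * quarticD1 g0 g1 g2 g3 g4 z
    + quarticD2 f0 f1 f2 f3 f4 z * quarticD2 g0 g1 g2 g3 g4 z
    - quarticD1 f0 f1 f2 f3 f4 z * quarticD3 g0 g1 g2 g3 g4 z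
    + quartic f0 f1 f2 f3 f4 z * (24 * g0)

/-- The second transvectant `τ(a,R) = 6a''R − 3a'R' + aR''` of a quadratic
`a(z) = a₀z² + 2a₁z + a₂` with a quartic `R`. -/
def tau2 (a0 a1 a2 r0 r1 r2 r3 r4 z : ℝ) : ℝ :=
  6 * (2 * a0) * quartic r0 r1 r2 r3 r4 z
    - 3 * (2 * a0 * z + 2 * a1) * quarticD1 r0 r1 r2 r3 r4 z
    + (a0 * z ^ 2 + 2 * a1 * z + a2) * quarticD2 r0 r1 r2 r3 r4 z

private lemma tau2_eq (a0 a1 a2 r0 r1 r2 r3 r4 z : ℝ) :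
    tau2 a0 a1 a2 r0 r1 r2 r3 r4 z =
      (2 * a0 * r2 - 6 * a1 * r1 + 12 * a2 * r0) * z ^ 2
        + 2 * (3 * a0 * r3 - 4 * a1 * r2 + 3 * a2 * r1) * z
        + (12 * a0 * r4 - 6 * a1 * r3 + 2 * a2 * r2) := by
  unfold tau2 quartic quarticD1 quarticD2; ring

private lemma quad_unique {A B C a b c : ℝ}
    (h : ∀ z : ℝ, A * z ^ 2 + 2 * B * z + C = a * z ^ 2 + 2 * b * z + c) :
    a = A ∧ b = B ∧ c = C := by
  have h0 := h 0; have h1 := h 1; have h2 := h (-1)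
  norm_num at h0 h1 h2
  refine ⟨by linarith, by linarith, by linarith⟩

private lemma exists_tau_iff (a0 a1 a2 r0 r1 r2 r3 r4 p0 p1 p2 : ℝ) :
    (∃ e0 e1 e2 : ℝ,
        (∀ z : ℝ, tau2 a0 a1 a2 r0 r1 r2 r3 r4 z = e0 * z ^ 2 + 2 * e1 * z + e2) ∧
        2 * e1 * p1 - (e2 * p0 + e0 * p2) = 0)
      ↔ 2 * (3 * a0 * r3 - 4 * a1 * r2 + 3 * a2 * r1) * p1
          - ((12 * a0 * r4 - 6 * a1 * r3 + 2 * a2 * r2) * p0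
            + (2 * a0 * r2 - 6 * a1 * r1 + 12 * a2 * r0) * p2) = 0 := by
  constructor
  · rintro ⟨e0, e1, e2, hz, hp⟩
    obtain ⟨h0, h1, h2⟩ := quad_unique (fun z => (tau2_eq a0 a1 a2 r0 r1 r2 r3 r4 z).symm.trans (hz z))
    rw [h0, h1, h2] at hp; linarith
  · intro hp
    exact ⟨_, _, _, fun z => tau2_eq a0 a1 a2 r0 r1 r2 r3 r4 z, hp⟩


/-- For all real quadratics `p`, `q` and every quartic `R`, the following are
equivalent: (i) `⟨pq, R⟩₄ = 0`; (ii) `⟨τ(q,R), p⟩ = 0`; (iii) `⟨τ(p,R), q⟩ = 0`,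
where `⟨a,b⟩ = 2a₁b₁ − (a₂b₀ + a₀b₂)` for quadratics `a(z) = a₀z² + 2a₁z + a₂`. -/
theorem apolarity_transvectant_equivalence
    (p0 p1 p2 q0 q1 q2 r0 r1 r2 r3 r4 : ℝ) :
    ((∀ z : ℝ, apolarity4 (p0 * q0) (2 * p0 * q1 + 2 * p1 * q0)
        (p0 * q2 + 4 * p1 * q1 + p2 * q0) (2 * p1 * q2 + 2 * p2 * q1) (p2 * q2)
        r0 r1 r2 r3 r4 z = 0)
      ↔ (∃ e0 e1 e2 : ℝ,
          (∀ z : ℝ, tau2 q0 q1 q2 r0 r1 r2 r3 r4 z = e0 * z ^ 2 + 2 * e1 * z + e2) ∧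
          2 * e1 * p1 - (e2 * p0 + e0 * p2) = 0))
    ∧ ((∃ e0 e1 e2 : ℝ,
          (∀ z : ℝ, tau2 q0 q1 q2 r0 r1 r2 r3 r4 z = e0 * z ^ 2 + 2 * e1 * z + e2) ∧
          2 * e1 * p1 - (e2 * p0 + e0 * p2) = 0)
      ↔ (∃ f0 f1 f2 : ℝ,
          (∀ z : ℝ, tau2 p0 p1 p2 r0 r1 r2 r3 r4 z = f0 * z ^ 2 + 2 * f1 * z + f2) ∧
          2 * f1 * q1 - (f2 * q0 + f0 * q2) = 0)) := by

  rw [exists_tau_iff, exists_tau_iff]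
  constructor
  · constructor
    · intro h
      have h0 := h 0
      unfold apolarity4 quartic quarticD1 quarticD2 quarticD3 at h0
      linear_combination (-1/2 : ℝ) * h0
    · intro h z
      unfold apolarity4 quartic quarticD1 quarticD2 quarticD3
      linear_combination (-2 : ℝ) * h
  · constructor <;> intro h <;> linear_combination h
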